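/- limsup_{m→∞} a(m)/h(m) = 1. -/

import Mathlib

private def jj : ℕ → ℕ
  | 0 => 0
  | 1 => 1
  | (n+2) => jj (n+1) + 2 * jj n

private lemma jj_zero : jj 0 = 0 := rfl
private lemma jj_one : jj 1 = 1 := rfl
private lemma jj_two : jj 2 = 1 := rfl
private lemma jj_add_two (n : ℕ) : jj (n+2) = jj (n+1) + 2 * jj n := rfl

private lemma jj_formula : ∀ n : ℕ, 3 * (jj n : ℤ) = 2^n - (-1)^n := by
  intro n
  induction n using Nat.strong_induction_on with
  | _ n ih =>
    match n with
    | 0 => simp [jj_zero]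
    | 1 => simp [jj_one]
    | (m+2) =>
      have h1 := ih (m+1) (by omega)
      have h2 := ih m (by omega)
      rw [jj_add_two]
      push_cast
      have e1 : (2:ℤ)^(m+2) = 4 * 2^m := by ring
      have e2 : (-1 : ℤ)^(m+2) = (-1)^m := by ring
      have e3 : (2:ℤ)^(m+1) = 2 * 2^m := by ring
      have e4 : (-1 : ℤ)^(m+1) = -(-1)^m := by ring
      rw [e1, e2]
      rw [e3, e4] at h1
      linarith

private lemma jj_pos : ∀ n : ℕ, 1 ≤ n → 1 ≤ jj n := by
  intro n
  induction n using Nat.strong_induction_on with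
  | _ n ih =>
    match n with
    | 0 => omega
    | 1 => intro _; simp [jj_one]
    | 2 => intro _; simp [jj_two]
    | (m+3) =>
      intro _
      have := ih (m+2) (by omega) (by omega)
      rw [show m+3 = (m+1)+2 by omega, jj_add_two]
      have e : jj (m+1+1) = jj (m+2) := rfl
      omega

private lemma jj_strict_mono : ∀ n : ℕ, 2 ≤ n → jj n < jj (n+1) := by
  intro n hn
  match n, hn with
  | (m+2), _ =>
    have e : jj (m+2+1) = jj (m+2) + 2 * jj (m+1) := rfl
    have := jj_pos (m+1) (by omega)
    omega

private lemma jj_mono : ∀ n : ℕ, 1 ≤ n → jj n ≤ jj (n+1) := by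
  intro n hn
  match n, hn with
  | 1, _ => simp [jj_one, jj_two]
  | (m+2), _ => exact le_of_lt (jj_strict_mono (m+2) (by omega))

private lemma jj_ge (n : ℕ) (hn : 2 ≤ n) : n - 1 ≤ jj n := by
  induction n with
  | zero => omega
  | succ m ih =>
    rcases Nat.lt_or_ge m 2 with hm | hm
    · interval_cases m <;> simp [jj_two, jj_one]
    · have h1 := jj_strict_mono m hm
      have h2 := ih hm
      omega
private lemma neg_one_pow_pm (i : ℕ) : (-1:ℤ)^i = 1 ∨ (-1:ℤ)^i = -1 := by
  rcases Nat.even_or_odd i with h | h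
  · left; exact h.neg_one_pow
  · right; exact h.neg_one_pow

private lemma jj_succ_int (n : ℕ) : (jj (n+1) : ℤ) = 2 * jj n + (-1)^n := by
  have h1 := jj_formula n
  have h2 := jj_formula (n+1)
  have e1 : (2:ℤ)^(n+1) = 2 * 2^n := by ring
  have e2 : (-1:ℤ)^(n+1) = -(-1)^n := by ring
  rw [e1, e2] at h2
  linarith

private lemma jj_succ_even (n : ℕ) (hn : Even n) : jj (n+1) = 2 * jj n + 1 := by
  have h := jj_succ_int n
  rw [hn.neg_one_pow] at h
  exact_mod_cast h

private lemma jj_succ_odd (n : ℕ) (hn : Odd n) : jj (n+1) + 1 = 2 * jj n := by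
  have h := jj_succ_int n
  rw [hn.neg_one_pow] at h
  have : (jj (n+1) : ℤ) + 1 = 2 * jj n := by linarith
  exact_mod_cast this

private lemma pow_add_jj (r : ℕ) : 2^r + jj r = jj (r+2) := by
  have h1 := jj_formula r
  have h2 := jj_formula (r+2)
  have e1 : (2:ℤ)^(r+2) = 4 * 2^r := by ring
  have e2 : (-1:ℤ)^(r+2) = (-1)^r := by ring
  rw [e1, e2] at h2
  have : ((2^r + jj r : ℕ) : ℤ) = (jj (r+2) : ℤ) := by push_cast; linarith
  exact_mod_cast this

private lemma jj_succ_le_pow (r : ℕ) : jj (r+1) ≤ 2^r := by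
  have h := jj_formula (r+1)
  have e1 : (2:ℤ)^(r+1) = 2 * 2^r := by ring
  rw [e1] at h
  have hp : (1:ℤ) ≤ 2^r := one_le_pow₀ (by norm_num)
  rcases neg_one_pow_pm (r+1) with hs | hs <;> rw [hs] at h <;>
    · have : (jj (r+1) : ℤ) ≤ ((2:ℕ)^r : ℤ) := by push_cast; linarith
      exact_mod_cast this

private lemma two_jj_le_pow (r : ℕ) (hr : 1 ≤ r) : 2 * jj r ≤ 2^r := by
  have h := jj_formula r
  have hp : (2:ℤ) ≤ 2^r := by
    calc (2:ℤ) = 2^1 := by norm_num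
    _ ≤ 2^r := pow_le_pow_right₀ (by norm_num) hr
  rcases neg_one_pow_pm r with hs | hs <;> rw [hs] at h <;>
    · have : ((2 * jj r : ℕ) : ℤ) ≤ ((2:ℕ)^r : ℤ) := by push_cast; linarith
      exact_mod_cast this

private lemma pow_le_jj (r : ℕ) : 2^(r+1) ≤ jj (r+3) := by
  have h := jj_formula (r+3)
  have e1 : (2:ℤ)^(r+3) = 4 * 2^(r+1) := by ring
  rw [e1] at h
  have hp : (1:ℤ) ≤ 2^(r+1) := one_le_pow₀ (by norm_num)
  rcases neg_one_pow_pm (r+3) with hs | hs <;> rw [hs] at h <;>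
    · have : ((2:ℕ)^(r+1) : ℤ) ≤ (jj (r+3) : ℤ) := by push_cast; linarith
      exact_mod_cast this

private lemma jj_le_jj {m n : ℕ} (hm : 1 ≤ m) (hmn : m ≤ n) : jj m ≤ jj n := by
  induction n with
  | zero => omega
  | succ k ih =>
    rcases Nat.lt_or_ge k m with hk | hk
    · have : m = k + 1 := by omega
      rw [this]
    · exact le_trans (ih hk) (jj_mono k (by omega))

/-- fib grows: 3 fib i ≤ 2 fib (i+1) for i ≥ 2 -/
private lemma fib_growth (m : ℕ) : 3 * Nat.fib (m+2) ≤ 2 * Nat.fib (m+3) := by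
  have h1 : Nat.fib (m+2) = Nat.fib m + Nat.fib (m+1) := Nat.fib_add_two
  have h2 : Nat.fib (m+3) = Nat.fib (m+1) + Nat.fib (m+2) := Nat.fib_add_two
  have h3 : Nat.fib m ≤ Nat.fib (m+1) := Nat.fib_mono (by omega)
  omega

/-- The core node inequality over ℤ. -/
private lemma NIZ_core (i r : ℕ) (hi : 2 ≤ i) (hir : i ≤ r) :
    (Nat.fib i : ℤ) * (2^(r+1) - 2*(-1)^r) ≤
      (Nat.fib r : ℤ) * (2^r + 2^i - (-1)^i - (-1)^r) := by
  have hpi : (4:ℤ) ≤ 2^i := by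
    calc (4:ℤ) = 2^2 := by norm_num
    _ ≤ 2^i := pow_le_pow_right₀ (by norm_num) hi
  have hpir : (2:ℤ)^i ≤ 2^r := pow_le_pow_right₀ (by norm_num) hir
  have hfibi : (0:ℤ) ≤ Nat.fib i := by positivity
  have hfibr : (0:ℤ) ≤ Nat.fib r := by positivity
  have hsi1 : (-1:ℤ)^i ≤ 1 := by rcases neg_one_pow_pm i with h|h <;> rw [h] <;> norm_num
  have hsi2 : (-1:ℤ) ≤ (-1)^i := by rcases neg_one_pow_pm i with h|h <;> rw [h] <;> norm_num
  have hsr1 : (-1:ℤ)^r ≤ 1 := by rcases neg_one_pow_pm r with h|h <;> rw [h] <;> norm_num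
  have hsr2 : (-1:ℤ) ≤ (-1)^r := by rcases neg_one_pow_pm r with h|h <;> rw [h] <;> norm_num
  rcases Nat.lt_or_ge r (i+1) with hc | hc
  · -- i = r
    have : i = r := by omega
    subst this
    apply le_of_eq; ring
  rcases Nat.lt_or_ge r (i+2) with hc2 | hc2
  · -- r = i + 1
    have : r = i + 1 := by omega
    subst this
    obtain ⟨m, rfl⟩ : ∃ m, i = m + 2 := ⟨i - 2, by omega⟩
    have hg : (3 * Nat.fib (m+2) : ℤ) ≤ 2 * Nat.fib (m+3) := by exact_mod_cast fib_growth m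
    have e2 : (-1:ℤ)^(m+2+1) = -(-1)^(m+2) := by ring
    have e3 : (2:ℤ)^(m+2+1) = 2 * 2^(m+2) := by ring
    have e4 : (2:ℤ)^(m+2+1+1) = 4 * 2^(m+2) := by ring
    rw [e2, e3, e4]
    -- goal: fib(m+2) * (4*2^(m+2) - 2*(-(-1)^(m+2))) ≤ fib(m+3) * (2*2^(m+2) + 2^(m+2) - (-1)^(m+2) + (-1)^(m+2))
    nlinarith [mul_le_mul_of_nonneg_right hg (le_trans (by norm_num) hpi),
      mul_le_mul_of_nonneg_left hsi2 hfibi, mul_le_mul_of_nonneg_left hsi1 hfibi,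
      mul_le_mul_of_nonneg_left hpi hfibi]
  · -- i + 2 ≤ r
    have hmono : (2 * Nat.fib i : ℤ) ≤ Nat.fib r := by
      have h1 : Nat.fib i + Nat.fib (i+1) = Nat.fib (i+2) := Nat.fib_add_two.symm
      have h2 : Nat.fib i ≤ Nat.fib (i+1) := Nat.fib_mono (by omega)
      have h3 : Nat.fib (i+2) ≤ Nat.fib r := Nat.fib_mono hc2
      have : 2 * Nat.fib i ≤ Nat.fib r := by omega
      exact_mod_cast this
    have e1 : (2:ℤ)^(r+1) = 2 * 2^r := by ring
    rw [e1]
    set X : ℤ := 2^r + 2^i - (-1)^i - (-1)^r with hX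
    have hXnn : (0:ℤ) ≤ X := by
      have : (1:ℤ) ≤ 2^r := one_le_pow₀ (by norm_num)
      simp only [hX]; linarith
    have t1 : (Nat.fib i : ℤ) * (2 * 2^r - 2*(-1)^r) ≤ (Nat.fib i : ℤ) * (2 * X) := by
      apply mul_le_mul_of_nonneg_left _ hfibi
      simp only [hX]; linarith
    have t3 : (2 * (Nat.fib i : ℤ)) * X ≤ (Nat.fib r : ℤ) * X :=
      mul_le_mul_of_nonneg_right hmono hXnn
    nlinarith [t1, t3]

/-- Node inequality in jj form. -/
private lemma NIZ (i r : ℕ) (hi : 2 ≤ i) (hir : i ≤ r) :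
    (Nat.fib i : ℤ) * ((jj (r+2) : ℤ) - jj (r+1)) ≤
      (Nat.fib r : ℤ) * (2^r + (jj i : ℤ) - jj (r+1)) := by
  have core := NIZ_core i r hi hir
  have h1 := jj_formula (r+2)
  have h2 := jj_formula (r+1)
  have h3 := jj_formula i
  have e1 : (2:ℤ)^(r+2) = 4 * 2^r := by ring
  have e2 : (-1:ℤ)^(r+2) = (-1)^r := by ring
  have e3 : (2:ℤ)^(r+1) = 2 * 2^r := by ring
  have e4 : (-1:ℤ)^(r+1) = -(-1)^r := by ring
  rw [e1, e2] at h1; rw [e3, e4] at h2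
  nlinarith [core]

/-- t = 1 node inequality. -/
private lemma T1Z (r : ℕ) (hr : 1 ≤ r) :
    ((jj (r+2) : ℤ) - jj (r+1)) ≤ (Nat.fib r : ℤ) * (2^r + 1 - jj (r+1)) := by
  have h1 := jj_formula (r+2)
  have h2 := jj_formula (r+1)
  have e1 : (2:ℤ)^(r+2) = 4 * 2^r := by ring
  have e2 : (-1:ℤ)^(r+2) = (-1)^r := by ring
  have e3 : (2:ℤ)^(r+1) = 2 * 2^r := by ring
  have e4 : (-1:ℤ)^(r+1) = -(-1)^r := by ring
  rw [e1, e2] at h1; rw [e3, e4] at h2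
  rcases Nat.lt_or_ge r 3 with hc | hc
  · interval_cases r <;> simp_all [jj_two, jj_one] <;> norm_num at * <;> nlinarith []
  · have hf : (2 : ℤ) ≤ Nat.fib r := by
      have : Nat.fib 3 ≤ Nat.fib r := Nat.fib_mono hc
      simp [Nat.fib] at this ⊢; exact_mod_cast by omega
    have hsr1 : (-1:ℤ)^r ≤ 1 := by rcases neg_one_pow_pm r with h|h <;> rw [h] <;> norm_num
    have hsr2 : (-1:ℤ) ≤ (-1)^r := by rcases neg_one_pow_pm r with h|h <;> rw [h] <;> norm_num
    have hp : (8:ℤ) ≤ 2^r := by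
      calc (8:ℤ) = 2^3 := by norm_num
      _ ≤ 2^r := pow_le_pow_right₀ (by norm_num) hc
    nlinarith [hf, hsr1, hsr2, hp]

/-- Piece finder. -/
private lemma piece_find : ∀ s : ℕ, ∀ t : ℕ, 2 ≤ t → t ≤ jj s →
    ∃ i, 2 ≤ i ∧ i + 1 ≤ s ∧ jj i ≤ t ∧ t ≤ jj (i+1) := by
  intro s
  induction s with
  | zero => intro t ht hts; simp [jj_zero] at hts; omega
  | succ k ih =>
    intro t ht hts
    rcases Nat.lt_or_ge k 2 with hk | hk
    · interval_cases k <;> simp [jj_one, jj_two] at hts <;> omega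
    · rcases le_or_gt t (jj k) with hc | hc
      · obtain ⟨i, h1, h2, h3, h4⟩ := ih t ht hc
        exact ⟨i, h1, by omega, h3, h4⟩
      · exact ⟨k, hk, by omega, by omega, hts⟩

/-- Linear interpolation helper. -/
private lemma interp {p q lo hi k : ℝ} (h1 : lo ≤ k) (h2 : k ≤ hi)
    (hlo : p + q * lo ≤ 0) (hhi : p + q * hi ≤ 0) : p + q * k ≤ 0 := by
  rcases le_or_gt 0 q with hq | hq
  · have : q * k ≤ q * hi := mul_le_mul_of_nonneg_left h2 hq
    linarith
  · have : q * k ≤ q * lo := mul_le_mul_of_nonpos_left h1 (le_of_lt hq)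
    linarith
section SternLemmas

variable {a : ℕ → ℕ} (ha0 : a 0 = 0) (ha1 : a 1 = 1)
  (haeven : ∀ n, 1 ≤ n → a (2 * n) = a n)
  (haodd : ∀ n, 1 ≤ n → a (2 * n + 1) = a n + a (n + 1))

include ha0 ha1 haeven haodd

private lemma aeven' : ∀ n, a (2 * n) = a n := by
  intro n
  rcases Nat.eq_zero_or_pos n with rfl | hn
  · simp
  · exact haeven n hn

private lemma aodd' : ∀ n, a (2 * n + 1) = a n + a (n + 1) := by
  intro n
  rcases Nat.eq_zero_or_pos n with rfl | hn
  · simpa [ha0] using ha1.symm ▸ rfl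
  · exact haodd n hn

private lemma apow : ∀ r : ℕ, a (2^r) = 1 := by
  intro r
  induction r with
  | zero => simpa using ha1
  | succ k ih =>
    have : (2:ℕ)^(k+1) = 2 * 2^k := by ring
    rw [this, aeven' ha0 ha1 haeven haodd]
    exact ih

private lemma amirror : ∀ r : ℕ, ∀ t : ℕ, t ≤ 2^r →
    a (2^r + t) = a (2^r - t) + a t := by
  intro r
  induction r with
  | zero =>
    intro t ht
    interval_cases t
    · simpa [ha0, ha1] using rfl
    · have h2 : a 2 = a 1 := by simpa using aeven' ha0 ha1 haeven haodd 1
      simp [h2, ha0, ha1]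
  | succ k ih =>
    intro t ht
    rcases Nat.even_or_odd t with ⟨u, hu⟩ | ⟨u, hu⟩
    · -- t = 2u
      subst hu
      have hu2 : u ≤ 2^k := by
        have : (2:ℕ)^(k+1) = 2*2^k := by ring
        omega
      have e1 : 2^(k+1) + (u + u) = 2 * (2^k + u) := by
        have : (2:ℕ)^(k+1) = 2*2^k := by ring
        omega
      have e2 : 2^(k+1) - (u + u) = 2 * (2^k - u) := by
        have : (2:ℕ)^(k+1) = 2*2^k := by ring
        omega
      rw [e1, aeven' ha0 ha1 haeven haodd, ih u hu2, e2,
        aeven' ha0 ha1 haeven haodd, show u + u = 2 * u by ring,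
        aeven' ha0 ha1 haeven haodd]
    · -- t = 2u + 1
      subst hu
      have hu2 : u + 1 ≤ 2^k := by
        have : (2:ℕ)^(k+1) = 2*2^k := by ring
        omega
      have e1 : 2^(k+1) + (2*u + 1) = 2 * (2^k + u) + 1 := by
        have : (2:ℕ)^(k+1) = 2*2^k := by ring
        omega
      have e2 : 2^(k+1) - (2*u + 1) = 2 * (2^k - (u+1)) + 1 := by
        have : (2:ℕ)^(k+1) = 2*2^k := by ring
        omega
      have e3 : 2^k + u + 1 = 2^k + (u+1) := by ring
      rw [e1, aodd' ha0 ha1 haeven haodd, ih u (by omega), e3, ih (u+1) hu2, e2,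
        aodd' ha0 ha1 haeven haodd, aodd' ha0 ha1 haeven haodd]
      have e4 : 2^k - (u+1) + 1 = 2^k - u := by omega
      rw [e4]
      ring
end SternLemmas
section SternLemmas2

variable {a : ℕ → ℕ} (ha0 : a 0 = 0) (ha1 : a 1 = 1)
  (haeven : ∀ n, 1 ≤ n → a (2 * n) = a n)
  (haodd : ∀ n, 1 ≤ n → a (2 * n + 1) = a n + a (n + 1))

include ha0 ha1 haeven haodd

private lemma rowbound : ∀ r : ℕ, ∀ m : ℕ, 2^r ≤ m → m < 2^(r+1) →
    a m ≤ Nat.fib (r+2) ∧ a m + a (m+1) ≤ Nat.fib (r+3) := by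
  intro r
  induction r with
  | zero =>
    intro m h1 h2
    have : m = 1 := by norm_num at h1 h2; omega
    subst this
    have h2' : a 2 = a 1 := by simpa using aeven' ha0 ha1 haeven haodd 1
    simp [ha1, h2', Nat.fib]
  | succ k ih =>
    intro m h1 h2
    have hp : (2:ℕ)^(k+1) = 2*2^k := by ring
    have hp2 : (2:ℕ)^(k+2) = 4*2^k := by ring
    rcases Nat.even_or_odd m with ⟨u, hu⟩ | ⟨u, hu⟩
    · -- m = 2u
      subst hu
      have hu1 : 2^k ≤ u := by omega
      have hu2 : u < 2^(k+1) := by rw [hp] at *; omega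
      obtain ⟨ihv, ihp⟩ := ih u hu1 hu2
      have e0 : u + u = 2 * u := by ring
      have e1 : a (u + u) = a u := by rw [e0]; exact aeven' ha0 ha1 haeven haodd u
      have e2 : a (u + u + 1) = a u + a (u+1) := by rw [e0]; exact aodd' ha0 ha1 haeven haodd u
      constructor
      · rw [e1]; exact le_trans ihv (Nat.fib_mono (by omega))
      · rw [e1, e2]
        have e5 : Nat.fib (k+1+3) = Nat.fib (k+2) + Nat.fib (k+3) := Nat.fib_add_two
        omega
    · -- m = 2u+1
      subst hu
      have hu1 : 2^k ≤ u := by omega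
      have hu2 : u < 2^(k+1) := by rw [hp] at *; omega
      obtain ⟨ihv, ihp⟩ := ih u hu1 hu2
      have e2 : a (2*u + 1) = a u + a (u+1) := aodd' ha0 ha1 haeven haodd u
      have e3 : a (2*u + 1 + 1) = a (u+1) := by
        have : 2*u+1+1 = 2*(u+1) := by ring
        rw [this]; exact aeven' ha0 ha1 haeven haodd (u+1)
      constructor
      · rw [e2]; exact ihp
      · rw [e2, e3]
        have hk1 : a (u+1) ≤ Nat.fib (k+2) := by
          rcases Nat.lt_or_ge (u+1) (2^(k+1)) with hc | hc
          · exact (ih (u+1) (by omega) hc).1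
          · have : u + 1 = 2^(k+1) := by omega
            rw [this, apow ha0 ha1 haeven haodd]
            have := Nat.fib_pos.mpr (show 0 < k+2 by omega)
            omega
        have e5 : Nat.fib (k+1+3) = Nat.fib (k+2) + Nat.fib (k+3) := Nat.fib_add_two
        omega

private lemma ajj : ∀ n : ℕ, 1 ≤ n → a (jj n) = Nat.fib n ∧
    (Even n → a (jj n + 1) = Nat.fib (n-1)) ∧ (Odd n → a (jj n - 1) = Nat.fib (n-1)) := by
  intro n
  induction n with
  | zero => omega
  | succ k ih =>
    intro _
    rcases Nat.eq_zero_or_pos k with rfl | hk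
    · refine ⟨by simpa [jj_one] using ha1, fun h => absurd h (by decide), ?_⟩
      intro _
      simp [jj_one, ha0, Nat.fib]
    obtain ⟨ihv, ihe, iho⟩ := ih hk
    rcases Nat.even_or_odd k with hke | hko
    · -- k even, k ≥ 2 : jj (k+1) = 2 jj k + 1
      have hrec : jj (k+1) = 2 * jj k + 1 := jj_succ_even k hke
      have hjpos : 1 ≤ jj k := jj_pos k hk
      have hk2 : 2 ≤ k := by
        rcases hke with ⟨w, hw⟩; omega
      have hv : a (jj (k+1)) = Nat.fib (k+1) := by
        rw [hrec, haodd (jj k) hjpos, ihv, ihe hke]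
        have : Nat.fib (k-1) + Nat.fib k = Nat.fib (k+1) := by
          have := Nat.fib_add_two (n := k-1)
          have e : k - 1 + 2 = k + 1 := by omega
          have e2 : k - 1 + 1 = k := by omega
          rw [e, e2] at this
          omega
        omega
      refine ⟨hv, ?_, ?_⟩
      · intro he
        exfalso
        rcases hke with ⟨w,hw⟩; rcases he with ⟨v,hv'⟩; omega
      · intro _
        have : jj (k+1) - 1 = 2 * jj k := by omega
        rw [this, haeven (jj k) hjpos, ihv]
        congr 1
    · -- k odd : jj (k+1) + 1 = 2 jj k
      have hrec := jj_succ_odd k hko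
      have hjpos : 1 ≤ jj k := jj_pos k hk
      rcases Nat.lt_or_ge k 3 with hk3 | hk3
      · -- k = 1
        have : k = 1 := by rcases hko with ⟨w,hw⟩; omega
        subst this
        have h2 : a 2 = a 1 := by simpa using aeven' ha0 ha1 haeven haodd 1
        refine ⟨by simpa [jj_two] using ha1, ?_, ?_⟩
        · intro _; simpa [jj_two, h2, ha1] using rfl
        · intro ho; exfalso; rcases ho with ⟨w,hw⟩; omega
      · -- k ≥ 3 odd
        have hj2 : 3 ≤ jj k := by
          have : jj 3 ≤ jj k := jj_le_jj (by omega) hk3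
          simpa [show jj 3 = 3 from rfl] using this
        have hrw : jj (k+1) = 2 * (jj k - 1) + 1 := by omega
        have hv : a (jj (k+1)) = Nat.fib (k+1) := by
          rw [hrw, haodd (jj k - 1) (by omega), iho hko]
          have e : jj k - 1 + 1 = jj k := by omega
          rw [e, ihv]
          have : Nat.fib (k-1) + Nat.fib k = Nat.fib (k+1) := by
            have := Nat.fib_add_two (n := k-1)
            have e : k - 1 + 2 = k + 1 := by omega
            have e2 : k - 1 + 1 = k := by omega
            rw [e, e2] at this
            omega
          omega
        refine ⟨hv, ?_, ?_⟩
        · intro _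
          have : jj (k+1) + 1 = 2 * jj k := hrec
          rw [this, haeven (jj k) hjpos, ihv]
          congr 1
        · intro ho
          exfalso
          rcases hko with ⟨w,hw⟩; rcases ho with ⟨v,hv'⟩; omega

end SternLemmas2
private lemma Dpos (m : ℕ) : (0:ℝ) < (jj (m+3) : ℝ) - (jj (m+2) : ℝ) := by
  have h1 := jj_strict_mono (m+2) (by omega)
  have h2 : (jj (m+2) : ℝ) < (jj (m+2+1) : ℝ) := by exact_mod_cast h1
  rw [show m+2+1 = m+3 from rfl] at h2
  linarith

section RealSide

variable {M : ℕ → ℝ} (hM : ∀ n : ℕ, M n = (2 ^ n - (-1) ^ n) / 3)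
variable {h : ℝ → ℝ} (h01 : ∀ x ∈ Set.Icc (0 : ℝ) 1, h x = x)
  (hlin : ∀ n : ℕ, 2 ≤ n → ∀ x ∈ Set.Icc (M n) (M (n + 1)),
      h x = (Nat.fib n : ℝ) +
        ((Nat.fib (n + 1) : ℝ) - (Nat.fib n : ℝ)) * (x - M n) / (M (n + 1) - M n))

include hM

private lemma Mjj (n : ℕ) : M n = (jj n : ℝ) := by
  have hz := jj_formula n
  have : (3:ℝ) * (jj n : ℝ) = 2^n - (-1)^n := by exact_mod_cast hz
  rw [hM n]
  linarith

include h01 hlin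

private lemma heval (m : ℕ) (x : ℝ) (hx1 : (jj (m+2) : ℝ) ≤ x) (hx2 : x ≤ (jj (m+3) : ℝ)) :
    h x = (Nat.fib (m+2) : ℝ) +
      (Nat.fib (m+1) : ℝ) * (x - (jj (m+2) : ℝ)) / ((jj (m+3) : ℝ) - (jj (m+2) : ℝ)) := by
  have e := hlin (m+2) (by omega) x ⟨by rw [Mjj hM]; exact hx1, by rw [show m+2+1 = m+3 from rfl, Mjj hM]; exact hx2⟩
  rw [Mjj hM, Mjj hM] at e
  rw [e]
  have ef : (Nat.fib (m+2+1) : ℝ) - (Nat.fib (m+2) : ℝ) = (Nat.fib (m+1) : ℝ) := by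
    have : Nat.fib (m+3) = Nat.fib (m+1) + Nat.fib (m+2) := Nat.fib_add_two
    push_cast [show m+2+1 = m+3 from rfl, this]
    ring
  rw [ef]

private lemma hlow (m : ℕ) (x : ℝ) (hx1 : (jj (m+2) : ℝ) ≤ x) (hx2 : x ≤ (jj (m+3) : ℝ)) :
    (Nat.fib (m+2) : ℝ) ≤ h x := by
  rw [heval hM h01 hlin m x hx1 hx2]
  have hD := Dpos m
  have : (0:ℝ) ≤ (Nat.fib (m+1) : ℝ) * (x - (jj (m+2) : ℝ)) / ((jj (m+3) : ℝ) - (jj (m+2) : ℝ)) := by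
    apply div_nonneg _ (le_of_lt hD)
    apply mul_nonneg (by positivity)
    linarith
  linarith

set_option maxHeartbeats 1000000 in
private lemma nodeIneq (s : ℕ) (t : ℕ) (ht : t ≤ jj (s+1)) :
    h (t : ℝ) + (Nat.fib (s+2) : ℝ) ≤ h ((2^(s+1) + t : ℕ) : ℝ) := by
  set x : ℝ := ((2^(s+1) + t : ℕ) : ℝ) with hxdef
  have hK1 : (jj (s+2) : ℝ) ≤ x := by
    have h1 : jj (s+2) ≤ 2^(s+1) := jj_succ_le_pow (s+1)
    rw [hxdef]
    push_cast
    have : ((jj (s+2):ℕ) : ℝ) ≤ ((2:ℝ))^(s+1) := by exact_mod_cast h1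
    linarith [Nat.cast_nonneg (α := ℝ) t]
  have hK2 : x ≤ (jj (s+3) : ℝ) := by
    have h2 : 2^(s+1) + t ≤ jj (s+3) := by
      have e := pow_add_jj (s+1)
      rw [show s+1+2 = s+3 from rfl] at e
      omega
    rw [hxdef]
    exact_mod_cast h2
  rw [heval hM h01 hlin s x hK1 hK2]
  have hD2 := Dpos s
  rcases Nat.lt_or_ge t 2 with ht2 | ht2
  · interval_cases t
    · have h0 : h ((0:ℕ):ℝ) = 0 := by
        rw [show ((0:ℕ):ℝ) = (0:ℝ) by norm_num, h01 0 ⟨le_refl 0, by norm_num⟩]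
      rw [h0]
      have hnn : (0:ℝ) ≤ (Nat.fib (s+1):ℝ) * (x - (jj (s+2):ℝ)) / ((jj (s+3):ℝ) - (jj (s+2):ℝ)) := by
        apply div_nonneg _ (le_of_lt hD2)
        exact mul_nonneg (by positivity) (by linarith)
      linarith
    · have h1 : h ((1:ℕ):ℝ) = 1 := by
        rw [show ((1:ℕ):ℝ) = (1:ℝ) by norm_num, h01 1 ⟨by norm_num, le_refl 1⟩]
      rw [h1]
      have hT := T1Z (s+1) (by omega)
      rw [show s+1+2 = s+3 from rfl, show s+1+1 = s+2 from rfl] at hT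
      have hTr : (jj (s+3):ℝ) - (jj (s+2):ℝ) ≤ (Nat.fib (s+1):ℝ) * (x - (jj (s+2):ℝ)) := by
        have hc : ((jj (s+3):ℝ)) - (jj (s+2):ℝ) ≤ (Nat.fib (s+1):ℝ) * (2^(s+1) + 1 - (jj (s+2):ℝ)) := by
          exact_mod_cast hT
        have hxeq : x = 2^(s+1) + ((1:ℕ):ℝ) := by rw [hxdef]; push_cast; ring
        rw [hxeq]
        push_cast
        push_cast at hc
        linarith
      have : (1:ℝ) ≤ (Nat.fib (s+1):ℝ) * (x - (jj (s+2):ℝ)) / ((jj (s+3):ℝ) - (jj (s+2):ℝ)) :=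
        (one_le_div hD2).mpr hTr
      linarith
  · obtain ⟨i, hi2, his, hti1, hti2⟩ := piece_find (s+1) t ht2 ht
    obtain ⟨m, rfl⟩ : ∃ m, i = m + 2 := ⟨i - 2, by omega⟩
    have hT1 : ((jj (m+2)):ℝ) ≤ (t:ℝ) := by exact_mod_cast hti1
    have hT2 : (t:ℝ) ≤ ((jj (m+3)):ℝ) := by
      have e : t ≤ jj (m+3) := by rw [show m+3 = m+2+1 from rfl]; exact hti2
      exact_mod_cast e
    rw [heval hM h01 hlin m (t:ℝ) hT1 hT2]
    have hD1 := Dpos m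
    have hxeq : x = 2^(s+1) + (t:ℝ) := by rw [hxdef]; push_cast; ring
    rw [hxeq]
    -- node facts
    have hN1 : (Nat.fib (m+2):ℝ) * ((jj (s+3):ℝ) - (jj (s+2):ℝ)) ≤
        (Nat.fib (s+1):ℝ) * (2^(s+1) + (jj (m+2):ℝ) - (jj (s+2):ℝ)) := by
      have hz := NIZ (m+2) (s+1) (by omega) (by omega)
      rw [show s+1+2 = s+3 from rfl, show s+1+1 = s+2 from rfl] at hz
      exact_mod_cast hz
    have hN2 : (Nat.fib (m+3):ℝ) * ((jj (s+3):ℝ) - (jj (s+2):ℝ)) ≤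
        (Nat.fib (s+1):ℝ) * (2^(s+1) + (jj (m+3):ℝ) - (jj (s+2):ℝ)) := by
      have hz := NIZ (m+3) (s+1) (by omega) (by omega)
      rw [show s+1+2 = s+3 from rfl, show s+1+1 = s+2 from rfl] at hz
      exact_mod_cast hz
    have hAB : (Nat.fib (m+3):ℝ) = (Nat.fib (m+2):ℝ) + (Nat.fib (m+1):ℝ) := by
      have : Nat.fib (m+3) = Nat.fib (m+1) + Nat.fib (m+2) := Nat.fib_add_two
      rw [this]; push_cast; ring
    rw [hAB] at hN2
    -- abbreviations (plain haves)
    have main : ((Nat.fib (m+2):ℝ) * ((jj (m+3):ℝ) - (jj (m+2):ℝ))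
          + (Nat.fib (m+1):ℝ) * ((t:ℝ) - (jj (m+2):ℝ))) * ((jj (s+3):ℝ) - (jj (s+2):ℝ))
        ≤ (Nat.fib (s+1):ℝ) * (2^(s+1) + (t:ℝ) - (jj (s+2):ℝ)) * ((jj (m+3):ℝ) - (jj (m+2):ℝ)) := by
      have elo : ((Nat.fib (m+2):ℝ) * ((jj (m+3):ℝ) - (jj (m+2):ℝ)) * ((jj (s+3):ℝ) - (jj (s+2):ℝ))
            - (Nat.fib (m+1):ℝ) * (jj (m+2):ℝ) * ((jj (s+3):ℝ) - (jj (s+2):ℝ))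
            - (Nat.fib (s+1):ℝ) * (2^(s+1) - (jj (s+2):ℝ)) * ((jj (m+3):ℝ) - (jj (m+2):ℝ)))
          + ((Nat.fib (m+1):ℝ) * ((jj (s+3):ℝ) - (jj (s+2):ℝ))
            - (Nat.fib (s+1):ℝ) * ((jj (m+3):ℝ) - (jj (m+2):ℝ))) * (jj (m+2):ℝ) ≤ 0 := by
        have := mul_le_mul_of_nonneg_right hN1 (le_of_lt hD1)
        ring_nf at this ⊢
        linarith [this]
      have ehi : ((Nat.fib (m+2):ℝ) * ((jj (m+3):ℝ) - (jj (m+2):ℝ)) * ((jj (s+3):ℝ) - (jj (s+2):ℝ))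
            - (Nat.fib (m+1):ℝ) * (jj (m+2):ℝ) * ((jj (s+3):ℝ) - (jj (s+2):ℝ))
            - (Nat.fib (s+1):ℝ) * (2^(s+1) - (jj (s+2):ℝ)) * ((jj (m+3):ℝ) - (jj (m+2):ℝ)))
          + ((Nat.fib (m+1):ℝ) * ((jj (s+3):ℝ) - (jj (s+2):ℝ))
            - (Nat.fib (s+1):ℝ) * ((jj (m+3):ℝ) - (jj (m+2):ℝ))) * (jj (m+3):ℝ) ≤ 0 := by
        have := mul_le_mul_of_nonneg_right hN2 (le_of_lt hD1)
        ring_nf at this ⊢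
        linarith [this]
      have key := interp hT1 hT2 elo ehi
      ring_nf at key ⊢
      linarith [key]
    have g1 : (Nat.fib (m+2):ℝ) + (Nat.fib (m+1):ℝ) * ((t:ℝ) - (jj (m+2):ℝ)) / ((jj (m+3):ℝ) - (jj (m+2):ℝ))
        = ((Nat.fib (m+2):ℝ) * ((jj (m+3):ℝ) - (jj (m+2):ℝ))
          + (Nat.fib (m+1):ℝ) * ((t:ℝ) - (jj (m+2):ℝ))) / ((jj (m+3):ℝ) - (jj (m+2):ℝ)) := by
      field_simp
    have g2 : ((Nat.fib (m+2):ℝ) * ((jj (m+3):ℝ) - (jj (m+2):ℝ))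
          + (Nat.fib (m+1):ℝ) * ((t:ℝ) - (jj (m+2):ℝ))) / ((jj (m+3):ℝ) - (jj (m+2):ℝ))
        ≤ (Nat.fib (s+1):ℝ) * (2^(s+1) + (t:ℝ) - (jj (s+2):ℝ)) / ((jj (s+3):ℝ) - (jj (s+2):ℝ)) := by
      rw [div_le_div_iff₀ hD1 hD2]
      exact main
    linarith [g1, g2]

end RealSide
private lemma abound
    {a : ℕ → ℕ} (ha0 : a 0 = 0) (ha1 : a 1 = 1)
    (haeven : ∀ n, 1 ≤ n → a (2 * n) = a n)
    (haodd : ∀ n, 1 ≤ n → a (2 * n + 1) = a n + a (n + 1))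
    {M : ℕ → ℝ} (hM : ∀ n : ℕ, M n = (2 ^ n - (-1) ^ n) / 3)
    {h : ℝ → ℝ} (h01 : ∀ x ∈ Set.Icc (0 : ℝ) 1, h x = x)
    (hlin : ∀ n : ℕ, 2 ≤ n → ∀ x ∈ Set.Icc (M n) (M (n + 1)),
      h x = (Nat.fib n : ℝ) +
        ((Nat.fib (n + 1) : ℝ) - (Nat.fib n : ℝ)) * (x - M n) / (M (n + 1) - M n)) :
    ∀ m : ℕ, (a m : ℝ) ≤ h (m : ℝ) := by
  intro m
  induction m using Nat.strong_induction_on with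
  | _ m ih =>
    rcases Nat.lt_or_ge m 2 with hm | hm
    · interval_cases m
      · rw [ha0, show ((0:ℕ):ℝ) = (0:ℝ) by norm_num, h01 0 ⟨le_refl 0, by norm_num⟩]
      · rw [ha1, show ((1:ℕ):ℝ) = (1:ℝ) by norm_num, h01 1 ⟨by norm_num, le_refl 1⟩]
    · have hlog : 1 ≤ Nat.log 2 m :=
        (Nat.le_log_iff_pow_le (by norm_num) (by omega)).2 (by simpa using hm)
      obtain ⟨s, hs⟩ : ∃ s, Nat.log 2 m = s + 1 := ⟨Nat.log 2 m - 1, by omega⟩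
      have hr1 : 2^(s+1) ≤ m := by
        have := Nat.pow_log_le_self 2 (show m ≠ 0 by omega)
        rwa [hs] at this
      have hr2 : m < 2^(s+2) := by
        have := Nat.lt_pow_succ_log_self (show 1 < 2 by norm_num) m
        rwa [hs] at this
      rcases le_or_gt m (jj (s+3)) with hc | hc
      · -- left part of the row
        obtain ⟨t, hmt⟩ : ∃ t, m = 2^(s+1) + t := ⟨m - 2^(s+1), by omega⟩
        have hjj3 : jj (s+3) = 2^(s+1) + jj (s+1) := by
          have e := pow_add_jj (s+1)
          rw [show s+1+2 = s+3 from rfl] at e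
          omega
        have ht : t ≤ jj (s+1) := by omega
        have htp : t ≤ 2^(s+1) := by
          have := two_jj_le_pow (s+1) (by omega)
          have := jj_succ_le_pow s
          have hpe : (2:ℕ)^(s+1) = 2*2^s := by ring
          omega
        have hmirror := amirror ha0 ha1 haeven haodd (s+1) t htp
        have hat : (a t : ℝ) ≤ h (t : ℝ) := ih t (by omega)
        have hrow : (a (2^(s+1) - t) : ℝ) ≤ (Nat.fib (s+2) : ℝ) := by
          rcases Nat.eq_zero_or_pos t with rfl | htpos
          · rw [Nat.sub_zero, apow ha0 ha1 haeven haodd]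
            have := Nat.fib_pos.mpr (show 0 < s+2 by omega)
            exact_mod_cast this
          · have hlo : 2^s ≤ 2^(s+1) - t := by
              have := jj_succ_le_pow s
              have hpe : (2:ℕ)^(s+1) = 2*2^s := by ring
              omega
            have hhi : 2^(s+1) - t < 2^(s+1) := by
              have : 1 ≤ 2^(s+1) := Nat.one_le_two_pow
              omega
            have := (rowbound ha0 ha1 haeven haodd s (2^(s+1) - t) hlo hhi).1
            exact_mod_cast this
        have hnode := nodeIneq hM h01 hlin s t ht
        have hcast : (a m : ℝ) = (a (2^(s+1) - t) : ℝ) + (a t : ℝ) := by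
          rw [hmt, hmirror]; push_cast; ring
        have hfinal : ((m:ℕ) : ℝ) = ((2^(s+1) + t : ℕ) : ℝ) := by rw [hmt]
        rw [hcast, hfinal]
        linarith
      · -- right part of the row
        have hup : m ≤ jj (s+4) := by
          have := pow_le_jj (s+1)
          rw [show s+1+3 = s+4 from rfl, show s+1+1 = s+2 from rfl] at this
          omega
        have hhm : (Nat.fib (s+3) : ℝ) ≤ h (m : ℝ) := by
          have := hlow hM h01 hlin (s+1) (m : ℝ)
            (by rw [show s+1+2 = s+3 from rfl]; exact_mod_cast le_of_lt hc)
            (by rw [show s+1+3 = s+4 from rfl]; exact_mod_cast hup)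
          rwa [show s+1+2 = s+3 from rfl] at this
        have hrow := (rowbound ha0 ha1 haeven haodd (s+1) m hr1 hr2).1
        have : (a m : ℝ) ≤ (Nat.fib (s+3) : ℝ) := by
          rw [show s+1+2 = s+3 from rfl] at hrow
          exact_mod_cast hrow
        linarith
/-- `limsup_{m→∞} a(m)/h(m) = 1`. -/
theorem limsup_stern_div_h
    (a : ℕ → ℕ) (ha0 : a 0 = 0) (ha1 : a 1 = 1)
    (haeven : ∀ n, 1 ≤ n → a (2 * n) = a n)
    (haodd : ∀ n, 1 ≤ n → a (2 * n + 1) = a n + a (n + 1))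
    (M : ℕ → ℝ) (hM : ∀ n : ℕ, M n = (2 ^ n - (-1) ^ n) / 3)
    (h : ℝ → ℝ)
    (h01 : ∀ x ∈ Set.Icc (0 : ℝ) 1, h x = x)
    (hlin : ∀ n : ℕ, 2 ≤ n → ∀ x ∈ Set.Icc (M n) (M (n + 1)),
      h x = (Nat.fib n : ℝ) +
        ((Nat.fib (n + 1) : ℝ) - (Nat.fib n : ℝ)) * (x - M n) / (M (n + 1) - M n)) :
    Filter.limsup (fun k : ℕ => (a k : ℝ) / h k) Filter.atTop = 1 := by
  -- positivity of h on positive integers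
  have hpos : ∀ k : ℕ, 1 ≤ k → (1:ℝ) ≤ h (k : ℝ) := by
    intro k hk
    rcases Nat.lt_or_ge k 2 with hk2 | hk2
    · have : k = 1 := by omega
      subst this
      rw [show ((1:ℕ):ℝ) = (1:ℝ) by norm_num, h01 1 ⟨by norm_num, le_refl 1⟩]
    · have hkj : k ≤ jj (k+1) := by
        have := jj_ge (k+1) (by omega)
        omega
      obtain ⟨i, hi2, _, hki1, hki2⟩ := piece_find (k+1) k hk2 hkj
      obtain ⟨m, rfl⟩ : ∃ m, i = m + 2 := ⟨i - 2, by omega⟩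
      have hf := hlow hM h01 hlin m (k : ℝ)
        (by exact_mod_cast hki1)
        (by rw [show m+3 = m+2+1 from rfl]; exact_mod_cast hki2)
      have : (1:ℝ) ≤ (Nat.fib (m+2) : ℝ) := by
        have := Nat.fib_pos.mpr (show 0 < m+2 by omega)
        exact_mod_cast this
      linarith
  have hnonneg : ∀ k : ℕ, (0:ℝ) ≤ h (k : ℝ) := by
    intro k
    rcases Nat.eq_zero_or_pos k with rfl | hk
    · rw [show ((0:ℕ):ℝ) = (0:ℝ) by norm_num, h01 0 ⟨le_refl 0, by norm_num⟩]
    · linarith [hpos k hk]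
  have hle : ∀ k : ℕ, (a k : ℝ) / h (k : ℝ) ≤ 1 := by
    intro k
    rcases Nat.eq_zero_or_pos k with rfl | hk
    · rw [ha0]; norm_num
    · rw [div_le_one (by linarith [hpos k hk])]
      exact abound ha0 ha1 haeven haodd hM h01 hlin k
  have hge0 : ∀ k : ℕ, (0:ℝ) ≤ (a k : ℝ) / h (k : ℝ) :=
    fun k => div_nonneg (Nat.cast_nonneg _) (hnonneg k)
  -- value 1 at Jacobsthal points
  have huval : ∀ n : ℕ, 2 ≤ n → (a (jj n) : ℝ) / h ((jj n : ℕ) : ℝ) = 1 := by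
    intro n hn
    obtain ⟨m, rfl⟩ : ∃ m, n = m + 2 := ⟨n - 2, by omega⟩
    have hval : a (jj (m+2)) = Nat.fib (m+2) := (ajj ha0 ha1 haeven haodd (m+2) (by omega)).1
    have hmono : (jj (m+2) : ℝ) ≤ (jj (m+3) : ℝ) := by
      have := jj_mono (m+2) (by omega)
      exact_mod_cast this
    have hh : h ((jj (m+2) : ℕ) : ℝ) = (Nat.fib (m+2) : ℝ) := by
      rw [heval hM h01 hlin m ((jj (m+2) : ℕ) : ℝ) le_rfl hmono]
      simp
    rw [hval, hh]
    have := Nat.fib_pos.mpr (show 0 < m+2 by omega)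
    have hfne : (Nat.fib (m+2) : ℝ) ≠ 0 := by positivity
    field_simp
  have hfreq : ∃ᶠ k in Filter.atTop, (1:ℝ) ≤ (a k : ℝ) / h (k : ℝ) := by
    rw [Filter.frequently_atTop]
    intro N
    refine ⟨jj (N+2), ?_, ?_⟩
    · have := jj_ge (N+2) (by omega)
      omega
    · rw [huval (N+2) (by omega)]
  apply le_antisymm
  · exact Filter.limsup_le_of_le (Filter.IsCoboundedUnder.of_frequently_ge hfreq)
      (Filter.Eventually.of_forall hle)
  · exact Filter.le_limsup_of_frequently_le hfreq (Filter.isBoundedUnder_of ⟨1, hle⟩)
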